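/- arXiv:2312.13912 — 2 statements merged into one kernel-verified Lean document; each statement's English description precedes it below -/
import Mathlib

section
/- Let a : ℕ → ℝ be a periodic sequence with period p ≥ 1 and let μ = (1/p) ∑_{i=0}^{p−1} a(i) be its mean. Then lim_{γ → 1⁻} (1−γ) · ∑_{i=0}^{∞} γ^i · a(i) = μ. -/
open Filter Finset

lemma aux_mod (a : ℕ → ℝ) (p : ℕ) (hp : 1 ≤ p) (hper : ∀ i, a (i + p) = a i) :
    ∀ i, a i = a (i % p) := by
  intro i
  induction i using Nat.strong_induction_on with
  | _ i ih =>
    rcases lt_or_ge i p with h | h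
    · rw [Nat.mod_eq_of_lt h]
    · have h1 : i - p + p = i := Nat.sub_add_cancel h
      have h2 := hper (i - p)
      rw [h1] at h2
      rw [h2, ih (i - p) (by omega), ← Nat.mod_eq_sub_mod h]

lemma aux_summable (a : ℕ → ℝ) (p : ℕ) (hp : 1 ≤ p) (hper : ∀ i, a (i + p) = a i)
    {γ : ℝ} (h0 : 0 ≤ γ) (h1 : γ < 1) : Summable (fun i => γ ^ i * a i) := by
  set C := ∑ r ∈ range p, |a r| with hC
  have hbound : ∀ i, |γ ^ i * a i| ≤ γ ^ i * C := by
    intro i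
    rw [abs_mul, abs_pow, abs_of_nonneg h0]
    apply mul_le_mul_of_nonneg_left _ (pow_nonneg h0 i)
    rw [aux_mod a p hp hper i]
    exact Finset.single_le_sum (f := fun r => |a r|) (fun r _ => abs_nonneg _)
      (Finset.mem_range.mpr (Nat.mod_lt i (by omega)))
  have : Summable (fun i => γ ^ i * C) :=
    (summable_geometric_of_lt_one h0 h1).mul_right C
  exact (this.of_nonneg_of_le (fun i => abs_nonneg _) hbound).of_abs

lemma aux_tsum (a : ℕ → ℝ) (p : ℕ) (hp : 1 ≤ p) (hper : ∀ i, a (i + p) = a i)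
    {γ : ℝ} (h0 : 0 ≤ γ) (h1 : γ < 1) :
    ∑' i, γ ^ i * a i = (∑ r ∈ range p, γ ^ r * a r) / (1 - γ ^ p) := by
  have hs := aux_summable a p hp hper h0 h1
  have hshift : (fun i => γ ^ (i + p) * a (i + p)) = fun i => γ ^ p * (γ ^ i * a i) := by
    funext i; rw [hper, pow_add]; ring
  have key := Summable.sum_add_tsum_nat_add p hs
  rw [show (∑' i, γ ^ (i + p) * a (i + p)) = γ ^ p * ∑' i, γ ^ i * a i by
    rw [← tsum_mul_left, ← hshift]] at key
  have hne : 1 - γ ^ p ≠ 0 := by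
    have : γ ^ p < 1 := pow_lt_one₀ h0 h1 (by omega)
    linarith
  field_simp
  linarith [key]

/-- Abelian theorem for periodic sequences: the normalized discounted sums
`(1-γ) ∑ γ^i a i` converge, as `γ → 1⁻`, to the mean of `a` over one period. -/
theorem stmt_10 (a : ℕ → ℝ) (p : ℕ) (hp : 1 ≤ p) (hper : ∀ i, a (i + p) = a i) :
    Filter.Tendsto (fun γ : ℝ => (1 - γ) * ∑' i, γ ^ i * a i)
      (nhdsWithin 1 (Set.Iio (1:ℝ)))
      (nhds ((∑ i ∈ Finset.range p, a i) / p)) := by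
  set g : ℝ → ℝ := fun γ => (∑ r ∈ range p, γ ^ r * a r) / (∑ k ∈ range p, γ ^ k) with hg
  have hglim : Filter.Tendsto g (nhdsWithin 1 (Set.Iio (1:ℝ)))
      (nhds ((∑ i ∈ Finset.range p, a i) / p)) := by
    have hc : ContinuousAt g 1 := by
      apply ContinuousAt.div
      · exact (continuous_finset_sum _ (fun r _ => by continuity)).continuousAt
      · exact (continuous_finset_sum _ (fun r _ => by continuity)).continuousAt
      · simp [Nat.cast_pos]; omega
    have : g 1 = (∑ i ∈ Finset.range p, a i) / p := by simp [hg]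
    rw [← this]
    exact hc.continuousWithinAt.tendsto
  apply hglim.congr'
  filter_upwards [Ioo_mem_nhdsLT_of_mem (by constructor <;> norm_num : (1:ℝ) ∈ Set.Ioc 0 1)]
    with γ hγ
  obtain ⟨h0, h1⟩ := hγ
  rw [aux_tsum a p hp hper h0.le h1]
  have hden : (∑ k ∈ range p, γ ^ k) ≠ 0 := by
    have : (0:ℝ) < ∑ k ∈ range p, γ ^ k :=
      Finset.sum_pos (fun k _ => pow_pos h0 k) (by simp; omega)
    linarith
  have hfac : 1 - γ ^ p = (1 - γ) * ∑ k ∈ range p, γ ^ k := by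
    have := geom_sum_mul γ p
    linarith [this]
  rw [hg]
  have h1γ : (1:ℝ) - γ ≠ 0 := by linarith
  simp only [hfac]
  rw [mul_div_assoc', mul_div_mul_left _ _ h1γ]
end

section
/- Let a : ℕ → ℝ be bounded and for each N define the partial average A_N = (1/(N+1)) ∑_{i=0}^{N} a(i). Let (N_k) be any strictly increasing sequence of indices with N_{k+1} − N_k bounded by a constant D. Then liminf_k A_{N_k} = liminf_N A_N. -/
open Filter

private lemma liminf_comp_eq (u : ℕ → ℝ) (φ : ℕ → ℕ) :
    Filter.liminf u (Filter.map φ atTop) = Filter.liminf (u ∘ φ) atTop := by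
  rw [Filter.liminf, Filter.liminf, Filter.map_map]

/-- The liminf of Cesàro averages of a bounded sequence is unchanged when evaluated
only along a strictly increasing subsequence of indices with bounded gaps. -/
theorem stmt_14 (a : ℕ → ℝ) (M : ℝ) (hM : ∀ i, |a i| ≤ M)
    (N : ℕ → ℕ) (hmono : StrictMono N) (D : ℕ) (hD : ∀ k, N (k + 1) - N k ≤ D) :
    Filter.liminf
        (fun k : ℕ => (∑ i ∈ Finset.range (N k + 1), a i) / (N k + 1)) Filter.atTop =
    Filter.liminf
        (fun n : ℕ => (∑ i ∈ Finset.range (n + 1), a i) / (n + 1)) Filter.atTop := by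
  set A : ℕ → ℝ := fun n => (∑ i ∈ Finset.range (n + 1), a i) / (n + 1) with hA
  have hM0 : 0 ≤ M := (abs_nonneg _).trans (hM 0)
  -- sums are bounded
  have hSb : ∀ n : ℕ, |∑ i ∈ Finset.range (n + 1), a i| ≤ (n + 1 : ℝ) * M := by
    intro n
    calc |∑ i ∈ Finset.range (n + 1), a i| ≤ ∑ i ∈ Finset.range (n + 1), |a i| :=
          Finset.abs_sum_le_sum_abs _ _
      _ ≤ ∑ _i ∈ Finset.range (n + 1), M := Finset.sum_le_sum fun i _ => hM i
      _ = (n + 1 : ℝ) * M := by simp [mul_comm]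
  have hAb : ∀ n, |A n| ≤ M := by
    intro n
    have hpos : (0 : ℝ) < (n : ℝ) + 1 := by positivity
    rw [hA, abs_div, abs_of_pos hpos, div_le_iff₀ hpos]
    calc |∑ i ∈ Finset.range (n + 1), a i| ≤ ((n : ℝ) + 1) * M := hSb n
      _ = M * ((n : ℝ) + 1) := by ring
  -- gap bound on averages
  have hdiff : ∀ n m : ℕ, n ≤ m → m ≤ n + D → |A m - A n| ≤ 2 * M * D / (n + 1) := by
    intro n m hnm hmD
    have hx : (0 : ℝ) < (n : ℝ) + 1 := by positivity
    have hy : (0 : ℝ) < (m : ℝ) + 1 := by positivity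
    have hxy : ((n : ℝ) + 1) ≤ (m : ℝ) + 1 := by exact_mod_cast Nat.succ_le_succ hnm
    have hmn : ((m : ℝ) + 1) - ((n : ℝ) + 1) ≤ (D : ℝ) := by
      have : (m : ℝ) ≤ (n : ℝ) + (D : ℝ) := by exact_mod_cast hmD
      linarith
    set Sn := ∑ i ∈ Finset.range (n + 1), a i with hSn
    set Sm := ∑ i ∈ Finset.range (m + 1), a i with hSm
    have hT : |Sm - Sn| ≤ (D : ℝ) * M := by
      have hsub : Sm - Sn = ∑ i ∈ Finset.Ico (n + 1) (m + 1), a i := by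
        rw [hSm, hSn, Finset.range_eq_Ico,
          ← Finset.sum_Ico_consecutive a (Nat.zero_le (n+1)) (Nat.succ_le_succ hnm)]
        simp only [Finset.range_eq_Ico, Nat.succ_eq_add_one]
        ring
      rw [hsub]
      calc |∑ i ∈ Finset.Ico (n + 1) (m + 1), a i| ≤ ∑ i ∈ Finset.Ico (n + 1) (m + 1), |a i| :=
            Finset.abs_sum_le_sum_abs _ _
        _ ≤ ∑ _i ∈ Finset.Ico (n + 1) (m + 1), M := Finset.sum_le_sum fun i _ => hM i
        _ = ((m + 1) - (n + 1) : ℕ) * M := by simp [Nat.card_Ico]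
        _ ≤ (D : ℝ) * M := by
            apply mul_le_mul_of_nonneg_right _ hM0
            have : (m + 1) - (n + 1) ≤ D := by omega
            exact_mod_cast this
    have hSnb : |Sn| ≤ ((n : ℝ) + 1) * M := by exact_mod_cast hSb n
    have key : A m - A n = Sn * (((n : ℝ)+1) - ((m : ℝ)+1)) / (((m:ℝ)+1) * ((n:ℝ)+1))
        + (Sm - Sn) / ((m : ℝ) + 1) := by
      rw [hA]
      push_cast
      field_simp
      ring
    rw [key]
    have h1 : |Sn * (((n : ℝ)+1) - ((m : ℝ)+1)) / (((m:ℝ)+1) * ((n:ℝ)+1))| ≤ M * D / ((n:ℝ)+1) := by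
      rw [abs_div, abs_of_pos (mul_pos hy hx), abs_mul]
      rw [div_le_div_iff₀ (mul_pos hy hx) hx]
      have h2 : |((n : ℝ)+1) - ((m : ℝ)+1)| ≤ (D : ℝ) := by
        rw [abs_sub_comm, abs_of_nonneg (by linarith)]
        exact hmn
      calc |Sn| * |((n : ℝ)+1) - ((m : ℝ)+1)| * ((n:ℝ)+1)
          ≤ (((n : ℝ)+1) * M) * (D : ℝ) * ((n:ℝ)+1) := by
            apply mul_le_mul_of_nonneg_right _ (le_of_lt hx)
            exact mul_le_mul hSnb h2 (abs_nonneg _) (by positivity)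
        _ ≤ M * D * (((m:ℝ)+1) * ((n:ℝ)+1)) := by
            have hc : M * (D:ℝ) * (((n:ℝ)+1) * ((n:ℝ)+1)) ≤ M * (D:ℝ) * (((m:ℝ)+1) * ((n:ℝ)+1)) :=
              mul_le_mul_of_nonneg_left (mul_le_mul_of_nonneg_right hxy hx.le) (by positivity)
            nlinarith [hc]
    have h2 : |(Sm - Sn) / ((m : ℝ) + 1)| ≤ M * D / ((n:ℝ)+1) := by
      rw [abs_div, abs_of_pos hy]
      exact div_le_div₀ (by positivity) (hT.trans (le_of_eq (mul_comm _ _))) hx hxy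
    calc |Sn * (((n : ℝ)+1) - ((m : ℝ)+1)) / (((m:ℝ)+1) * ((n:ℝ)+1)) + (Sm - Sn) / ((m : ℝ) + 1)|
        ≤ _ + _ := abs_add_le _ _
      _ ≤ M * D / ((n:ℝ)+1) + M * D / ((n:ℝ)+1) := add_le_add h1 h2
      _ = 2 * M * D / ((n:ℝ)+1) := by ring
  -- index function: largest k with N k ≤ n
  set φ : ℕ → ℕ := fun n => Nat.findGreatest (fun k => N k ≤ n) n with hφ
  have hφ1 : ∀ n, N 0 ≤ n → N (φ n) ≤ n := fun n hn =>
    Nat.findGreatest_spec (P := fun k => N k ≤ n) (Nat.zero_le n) hn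
  have hφlt : ∀ n, n < N (φ n + 1) := by
    intro n
    by_contra hcon
    push_neg at hcon
    exact Nat.findGreatest_is_greatest (P := fun k => N k ≤ n) (Nat.lt_succ_self _)
      ((hmono.le_apply).trans hcon) hcon
  have hgap : ∀ n, n ≤ N (φ n) + D := by
    intro n
    have h1 := hφlt n
    have h2 := hD (φ n)
    have h3 : N (φ n) ≤ N (φ n + 1) := hmono.monotone (Nat.le_succ _)
    omega
  have hφtend : Tendsto φ atTop atTop := by
    apply tendsto_atTop.2
    intro k
    filter_upwards [eventually_ge_atTop (N k)] with n hn
    exact Nat.le_findGreatest ((hmono.le_apply).trans hn) hn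
  have hNφtend : Tendsto (fun n => N (φ n)) atTop atTop := (hmono.tendsto_atTop).comp hφtend
  -- the difference tends to 0
  have hzero : Tendsto (fun n => A n - A (N (φ n))) atTop (nhds 0) := by
    have gtend : Tendsto (fun m : ℕ => 2 * M * D / ((m : ℝ) + 1)) atTop (nhds 0) := by
      simpa [mul_one_div, div_eq_mul_inv] using
        tendsto_one_div_add_atTop_nhds_zero_nat.const_mul (2 * M * (D:ℝ))
    apply squeeze_zero_norm' _ (gtend.comp hNφtend)
    filter_upwards [eventually_ge_atTop (N 0)] with n hn
    have := hdiff (N (φ n)) n (hφ1 n hn) (hgap n)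
    simpa [Real.norm_eq_abs, Function.comp] using this
  -- boundedness facts
  have hbge : ∀ (F : Filter ℕ) (u : ℕ → ℕ), F.IsBoundedUnder (· ≥ ·) (fun n => A (u n)) :=
    fun F u => isBoundedUnder_of ⟨-M, fun n => neg_le_of_abs_le (hAb (u n))⟩
  have hble : ∀ (F : Filter ℕ) (u : ℕ → ℕ), F.IsBoundedUnder (· ≤ ·) (fun n => A (u n)) :=
    fun F u => isBoundedUnder_of ⟨M, fun n => le_of_abs_le (hAb (u n))⟩
  -- step 1 : liminf A ≤ liminf (A ∘ N)
  have step1 : liminf A atTop ≤ liminf (fun k => A (N k)) atTop := by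
    have h := liminf_le_liminf_of_le (u := A) hmono.tendsto_atTop
      (hbge atTop id) ((hble (Filter.map N atTop) id).isCoboundedUnder_ge)
    rw [liminf_comp_eq A N] at h
    exact h
  -- step 2 : liminf (A ∘ N) ≤ liminf (A ∘ N ∘ φ)
  have step2 : liminf (fun k => A (N k)) atTop ≤ liminf (fun n => A (N (φ n))) atTop := by
    have h := liminf_le_liminf_of_le (u := fun k => A (N k)) hφtend
      (hbge atTop N) ((hble (Filter.map φ atTop) N).isCoboundedUnder_ge)
    rwa [liminf_comp_eq (fun k => A (N k)) φ] at h
  -- step 3 : liminf (A ∘ N ∘ φ) ≤ liminf A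
  have step3 : liminf (fun n => A (N (φ n))) atTop ≤ liminf A atTop := by
    apply le_of_forall_pos_le_add
    intro ε hε
    have habs : Tendsto (fun n => |A n - A (N (φ n))|) atTop (nhds 0) := by
      simpa using hzero.abs
    have hev : ∀ᶠ n in atTop, A (N (φ n)) ≤ A n + ε := by
      filter_upwards [habs.eventually_lt_const hε] with n hn
      have h := abs_lt.1 hn
      linarith [h.1]
    calc liminf (fun n => A (N (φ n))) atTop ≤ liminf (fun n => A n + ε) atTop := by
          have hv : (atTop.IsBoundedUnder (· ≤ ·) fun n => A n + ε) :=
            isBoundedUnder_of ⟨M + ε, fun n => by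
              have := le_of_abs_le (hAb n); linarith⟩
          exact liminf_le_liminf hev (hbge atTop (fun n => N (φ n))) hv.isCoboundedUnder_ge
      _ = liminf A atTop + ε := liminf_add_const atTop A ε
          ((hble atTop id).isCoboundedUnder_ge) (hbge atTop id)
  exact le_antisymm (step2.trans step3) step1
end
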